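/- If G is a connected graph and S is a metric basis of G containing a vertex v that is a basis forced vertex (i.e., v belongs to every metric basis of G), and H is the graph obtained from G by attaching a new pendant vertex u to v, then dim(H) = dim(G). -/

import Mathlib

open SimpleGraph

def isResolving {V : Type*} (G : SimpleGraph V) (S : Set V) : Prop :=
  ∀ x y : V, x ≠ y → ∃ s ∈ S, G.dist s x ≠ G.dist s y

noncomputable def metricDim {V : Type*} (G : SimpleGraph V) : ℕ :=
  sInf {n | ∃ S : Set V, isResolving G S ∧ S.ncard = n}

def isMetricBasis {V : Type*} (G : SimpleGraph V) (S : Set V) : Prop :=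
  isResolving G S ∧ S.ncard = metricDim G

def isBasisForced {V : Type*} (G : SimpleGraph V) (v : V) : Prop :=
  ∀ S : Set V, isMetricBasis G S → v ∈ S

def attachPendant {V : Type*} (G : SimpleGraph V) (v : V) : SimpleGraph (Option V) :=
  SimpleGraph.fromRel (fun x y =>
    (∃ a b, x = some a ∧ y = some b ∧ G.Adj a b) ∨ (x = some v ∧ y = none))

section Aux
variable {V : Type*} {G : SimpleGraph V} {v : V}

lemma attach_adj_some_some {a b : V} :
    (attachPendant G v).Adj (some a) (some b) ↔ G.Adj a b := by
  simp only [attachPendant, fromRel_adj, ne_eq, Option.some.injEq]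
  constructor
  · rintro ⟨hne, h⟩
    rcases h with (⟨a', b', ha, hb, hab⟩ | ⟨_, h⟩) | (⟨a', b', ha, hb, hab⟩ | ⟨_, h⟩)
    · subst ha; subst hb; exact hab
    · exact absurd h (by simp)
    · subst ha; subst hb; exact hab.symm
    · exact absurd h (by simp)
  · intro h
    exact ⟨h.ne, Or.inl (Or.inl ⟨a, b, rfl, rfl, h⟩)⟩

lemma attach_adj_none {w : Option V} :
    (attachPendant G v).Adj none w ↔ w = some v := by
  simp only [attachPendant, fromRel_adj, ne_eq]
  constructor
  · rintro ⟨hne, h⟩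
    rcases h with (⟨a', b', ha, _⟩ | ⟨h, _⟩) | (⟨a', b', _, hb, _⟩ | ⟨hw, _⟩)
    · exact absurd ha (by simp)
    · exact absurd h (by simp)
    · exact absurd hb (by simp)
    · exact hw
  · rintro rfl
    exact ⟨by simp, Or.inr (Or.inr (by simp))⟩

lemma attach_adj_some_none {a : V} :
    (attachPendant G v).Adj (some a) none ↔ a = v := by
  rw [adj_comm, attach_adj_none, Option.some.injEq, eq_comm]

def someHom (G : SimpleGraph V) (v : V) : G →g attachPendant G v :=
  ⟨some, fun h => attach_adj_some_some.mpr h⟩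

lemma walk_down : ∀ (n : ℕ) (a b : V) (p : (attachPendant G v).Walk (some a) (some b)),
    p.length ≤ n → ∃ q : G.Walk a b, q.length ≤ p.length := by
  intro n
  induction n with
  | zero =>
    intro a b p hp
    have h := SimpleGraph.Walk.eq_of_length_eq_zero (Nat.le_zero.mp hp)
    obtain rfl : a = b := Option.some_injective _ h
    exact ⟨SimpleGraph.Walk.nil, by simp⟩
  | succ n ih =>
    intro a b p hp
    cases p with
    | nil => exact ⟨SimpleGraph.Walk.nil, by simp⟩
    | @cons _ w _ h p' =>
      cases w with
      | some c =>
        obtain ⟨q', hq'⟩ := ih c b p' (by simpa using Nat.le_of_succ_le_succ hp)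
        exact ⟨SimpleGraph.Walk.cons (attach_adj_some_some.mp h) q',
          by simpa using Nat.succ_le_succ hq'⟩
      | none =>
        have hav : a = v := attach_adj_some_none.mp h
        cases p' with
        | @cons _ w2 _ h2 p'' =>
          obtain rfl : w2 = some v := attach_adj_none.mp h2
          obtain ⟨q, hq⟩ := ih v b p'' (by
            simp only [SimpleGraph.Walk.length_cons] at hp
            omega)
          exact ⟨q.copy hav.symm rfl,
            by simp only [SimpleGraph.Walk.length_copy, SimpleGraph.Walk.length_cons]; omega⟩

lemma attach_connected (hG : G.Connected) : (attachPendant G v).Connected := by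
  rw [connected_iff]
  refine ⟨?_, ⟨none⟩⟩
  have hsome : ∀ a b : V, (attachPendant G v).Reachable (some a) (some b) := by
    intro a b
    exact (hG a b).map (someHom G v)
  have hnone : ∀ a : V, (attachPendant G v).Reachable none (some a) := by
    intro a
    exact (Adj.reachable (attach_adj_none.mpr rfl)).trans (hsome v a)
  rintro (_ | a) (_ | b)
  · rfl
  · exact hnone b
  · exact (hnone a).symm
  · exact hsome a b

lemma attach_dist_some_some (hG : G.Connected) (a b : V) :
    (attachPendant G v).dist (some a) (some b) = G.dist a b := by
  apply le_antisymm
  · obtain ⟨p, hp⟩ := (hG a b).exists_walk_length_eq_dist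
    calc (attachPendant G v).dist (some a) (some b) ≤ (p.map (someHom G v)).length :=
          SimpleGraph.dist_le _
      _ = G.dist a b := by rw [SimpleGraph.Walk.length_map, hp]
  · obtain ⟨p, hp⟩ := ((attach_connected hG) (some a) (some b)).exists_walk_length_eq_dist
    obtain ⟨q, hq⟩ := walk_down p.length a b p le_rfl
    calc G.dist a b ≤ q.length := SimpleGraph.dist_le q
      _ ≤ p.length := hq
      _ = _ := hp

lemma attach_dist_none_some (hG : G.Connected) (a : V) :
    (attachPendant G v).dist none (some a) = G.dist v a + 1 := by
  apply le_antisymm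
  · obtain ⟨p, hp⟩ := (hG v a).exists_walk_length_eq_dist
    calc (attachPendant G v).dist none (some a)
        ≤ (SimpleGraph.Walk.cons (attach_adj_none.mpr rfl) (p.map (someHom G v))).length :=
          SimpleGraph.dist_le _
      _ = G.dist v a + 1 := by
          exact congrArg (· + 1) ((SimpleGraph.Walk.length_map (someHom G v) p).trans hp)
  · obtain ⟨p, hp⟩ := ((attach_connected hG) none (some a)).exists_walk_length_eq_dist
    cases p with
    | @cons _ w _ h p' =>
      obtain rfl : w = some v := attach_adj_none.mp h
      have h1 : (attachPendant G v).dist (some v) (some a) ≤ p'.length :=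
        SimpleGraph.dist_le p'
      rw [attach_dist_some_some hG] at h1
      simp only [SimpleGraph.Walk.length_cons] at hp
      omega

end Aux

theorem stmt0 {V : Type*} [Fintype V] (G : SimpleGraph V) (hG : G.Connected)
    (v : V) (hv : isBasisForced G v)
    (S : Set V) (hS : isMetricBasis G S) (hvS : v ∈ S) :
    metricDim (attachPendant G v) = metricDim G := by
  classical
  set H := attachPendant G v with hH
  -- the set W = some '' (S \ {v}) ∪ {none} resolves H
  set W : Set (Option V) := (some '' (S \ {v})) ∪ {none} with hW
  have hWres : isResolving H W := by
    rintro (_ | a) (_ | b) hxy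
    · exact absurd rfl hxy
    · refine ⟨none, Or.inr rfl, ?_⟩
      rw [SimpleGraph.dist_self, attach_dist_none_some hG]
      omega
    · refine ⟨none, Or.inr rfl, ?_⟩
      rw [SimpleGraph.dist_self, attach_dist_none_some hG]
      omega
    · have hab : a ≠ b := fun h => hxy (by rw [h])
      obtain ⟨s, hsS, hsd⟩ := hS.1 a b hab
      by_cases hsv : s = v
      · refine ⟨none, Or.inr rfl, ?_⟩
        rw [attach_dist_none_some hG, attach_dist_none_some hG]
        subst hsv
        omega
      · refine ⟨some s, Or.inl ⟨s, ⟨hsS, hsv⟩, rfl⟩, ?_⟩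
        rw [attach_dist_some_some hG, attach_dist_some_some hG]
        exact hsd
  have hWcard : W.ncard = metricDim G := by
    have hdisj : Disjoint (some '' (S \ {v})) ({none} : Set (Option V)) := by
      simp [Set.disjoint_singleton_right]
    rw [hW, Set.ncard_union_eq hdisj (Set.toFinite _) (Set.toFinite _),
      Set.ncard_image_of_injective _ (Option.some_injective V), Set.ncard_singleton,
      Set.ncard_diff_singleton_add_one hvS (Set.toFinite S), hS.2]
  -- dim H ≤ dim G
  have h1 : metricDim H ≤ metricDim G := by
    apply Nat.sInf_le
    exact ⟨W, hWres, hWcard⟩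
  -- dim G ≤ dim H
  have hne : {n | ∃ T : Set (Option V), isResolving H T ∧ T.ncard = n}.Nonempty :=
    ⟨W.ncard, W, hWres, rfl⟩
  have hmem := Nat.sInf_mem hne
  obtain ⟨T, hTres, hTcard⟩ := hmem
  set T' : Set V := {a | some a ∈ T ∨ (a = v ∧ none ∈ T)} with hT'
  have hT'res : isResolving G T' := by
    intro x y hxy
    obtain ⟨t, htT, htd⟩ := hTres (some x) (some y) (by simpa using hxy)
    cases t with
    | none =>
      refine ⟨v, Or.inr ⟨rfl, htT⟩, ?_⟩
      rw [attach_dist_none_some hG, attach_dist_none_some hG] at htd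
      omega
    | some s =>
      refine ⟨s, Or.inl htT, ?_⟩
      rw [attach_dist_some_some hG, attach_dist_some_some hG] at htd
      exact htd
  have hT'card : T'.ncard ≤ T.ncard := by
    apply Set.ncard_le_ncard_of_injOn (fun a => if some a ∈ T then some a else none)
    · intro a ha
      by_cases h : some a ∈ T
      · simp [h]
      · rcases ha with h' | ⟨_, hn⟩
        · exact absurd h' h
        · simpa [h] using hn
    · intro a ha b hb hab
      by_cases h1' : some a ∈ T
      · by_cases h2' : some b ∈ T
        · simpa [h1', h2'] using hab
        · simp [h1', h2'] at hab
      · by_cases h2' : some b ∈ T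
        · simp [h1', h2'] at hab
        · have ha' : a = v := by
            rcases ha with h' | ⟨h', _⟩
            · exact absurd h' h1'
            · exact h'
          have hb' : b = v := by
            rcases hb with h' | ⟨h', _⟩
            · exact absurd h' h2'
            · exact h'
          rw [ha', hb']
  have h2 : metricDim G ≤ metricDim H := by
    calc metricDim G ≤ T'.ncard := Nat.sInf_le ⟨T', hT'res, rfl⟩
      _ ≤ T.ncard := hT'card
      _ = metricDim H := hTcard
  omega
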